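/- (Pointwise algebraic step of Jiang's theorem) For a Riemannian immersion φ : (M⁴,g) → (N,h) with nowhere-vanishing mean curvature H, the biharmonic stress-energy tensor S₂ vanishes if and only if φ is pseudo-umbilical. -/
import Mathlib


open scoped RealInnerProductSpace

/-- pointwise algebraic step of Jiang's theorem: for a Riemannian immersion
`φ : (M⁴,g) → (N,h)` with nowhere-vanishing mean curvature (pointwise: `V = T_pM`
4-dimensional, `B` second fundamental form, `H = (1/4) trace B ≠ 0`, `τ(φ) = 4H`,
`S₂(X,Y) = −(1/2)|τ|²⟨X,Y⟩ + 2⟨τ, B(X,Y)⟩`), the tensor `S₂` vanishes iff `φ` is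
pseudo-umbilical. -/
theorem stmt_14 {V W : Type*}
    [NormedAddCommGroup V] [InnerProductSpace ℝ V]
    [NormedAddCommGroup W] [InnerProductSpace ℝ W]
    (e : OrthonormalBasis (Fin 4) ℝ V)
    (B : V →ₗ[ℝ] V →ₗ[ℝ] W) (hBsymm : ∀ X Y : V, B X Y = B Y X)
    (H : W) (hH : H = (4 : ℝ)⁻¹ • ∑ i : Fin 4, B (e i) (e i)) (hH0 : H ≠ 0)
    (τ : W) (hτ : τ = (4 : ℝ) • H)
    (S2 : V → V → ℝ)
    (hS2 : ∀ X Y : V, S2 X Y = -(1 / 2) * ‖τ‖ ^ 2 * ⟪X, Y⟫ + 2 * ⟪τ, B X Y⟫) :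
    (∀ X Y : V, S2 X Y = 0) ↔ (∀ X Y : V, ⟪H, B X Y⟫ = ‖H‖ ^ 2 * ⟪X, Y⟫) := by
  have key : ∀ X Y : V, S2 X Y = 8 * (⟪H, B X Y⟫ - ‖H‖ ^ 2 * ⟪X, Y⟫) := by
    intro X Y
    rw [hS2, hτ, norm_smul, real_inner_smul_left]
    simp
    ring
  constructor
  · intro h X Y
    have := key X Y
    rw [h X Y] at this
    linarith
  · intro h X Y
    rw [key X Y, h X Y]
    ring
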